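/- Let A ∈ ℝ^{n×n} be a symmetric matrix, g ∈ ℝ^n, and N a positive integer. Let ξ_1, …, ξ_N ∈ ℝ^n be arbitrary vectors, and define ṽ_0 = g, ṽ_1 = A g − ξ_1, ṽ_k = 2(A ṽ_{k−1} − ξ_k) − ṽ_{k−2} for 2 ≤ k ≤ N, and δ_k = T_k(A)g − ṽ_k. Then for every k with 1 ≤ k ≤ N, δ_k = U_{k−1}(A) ξ_1 + 2·Σ_{i=2}^{k} U_{k−i}(A) ξ_i, where U_j denotes the j-th Chebyshev polynomial of the second kind. -/

import Mathlib

open Matrix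

/-- `T_k(A)`: the `k`-th Chebyshev polynomial of the first kind applied to a matrix `A`. -/
noncomputable def chebTMat {n : ℕ} (A : Matrix (Fin n) (Fin n) ℝ) (k : ℕ) :
    Matrix (Fin n) (Fin n) ℝ :=
  Polynomial.aeval A (Polynomial.Chebyshev.T ℝ (k : ℤ))

/-- `U_k(A)`: the `k`-th Chebyshev polynomial of the second kind applied to a matrix `A`. -/
noncomputable def chebUMat {n : ℕ} (A : Matrix (Fin n) (Fin n) ℝ) (k : ℤ) :
    Matrix (Fin n) (Fin n) ℝ :=
  Polynomial.aeval A (Polynomial.Chebyshev.U ℝ k)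


lemma chebUMat_neg_one {n : ℕ} (A : Matrix (Fin n) (Fin n) ℝ) : chebUMat A (-1) = 0 := by
  simp [chebUMat, Polynomial.Chebyshev.U_neg_one]

lemma chebUMat_zero {n : ℕ} (A : Matrix (Fin n) (Fin n) ℝ) : chebUMat A 0 = 1 := by
  simp [chebUMat, Polynomial.Chebyshev.U_zero]

lemma aux_aeval_two_X_mul {n : ℕ} (A : Matrix (Fin n) (Fin n) ℝ) (p : Polynomial ℝ) :
    Polynomial.aeval A (2 * Polynomial.X * p) = (2 : ℝ) • (A * Polynomial.aeval A p) := by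
  rw [mul_assoc, _root_.map_mul, _root_.map_mul, Polynomial.aeval_X, _root_.map_ofNat,
    two_mul, two_smul]

lemma chebUMat_add_two {n : ℕ} (A : Matrix (Fin n) (Fin n) ℝ) (m : ℤ) :
    chebUMat A (m + 2) = (2 : ℝ) • (A * chebUMat A (m + 1)) - chebUMat A m := by
  have h := Polynomial.Chebyshev.U_add_two ℝ m
  simp only [chebUMat, h, map_sub, aux_aeval_two_X_mul]

lemma chebTMat_add_two {n : ℕ} (A : Matrix (Fin n) (Fin n) ℝ) (k : ℕ) :
    chebTMat A (k + 2) = (2 : ℝ) • (A * chebTMat A (k + 1)) - chebTMat A k := by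
  have hc : ((k + 2 : ℕ) : ℤ) = (k : ℤ) + 2 := by push_cast; ring
  have hc1 : ((k + 1 : ℕ) : ℤ) = (k : ℤ) + 1 := by push_cast; ring
  have h := Polynomial.Chebyshev.T_add_two ℝ (k : ℤ)
  simp only [chebTMat, hc, hc1, h, map_sub, aux_aeval_two_X_mul]

lemma mulVec_finsum {n : ℕ} (A : Matrix (Fin n) (Fin n) ℝ) (s : Finset ℕ) (f : ℕ → Fin n → ℝ) :
    A.mulVec (∑ i ∈ s, f i) = ∑ i ∈ s, A.mulVec (f i) := by
  classical
  induction s using Finset.induction with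
  | empty => simp [Matrix.mulVec_zero]
  | insert _ _ h ihs => simp [Finset.sum_insert h, Matrix.mulVec_add, ihs]

/-- **Accumulated error of the inexact Chebyshev matrix recurrence in terms of
Chebyshev polynomials of the second kind.**  With `ṽ_0 = g`, `ṽ_1 = Ag - ξ_1`,
`ṽ_k = 2(Aṽ_{k-1} - ξ_k) - ṽ_{k-2}` and `δ_k = T_k(A)g - ṽ_k`, we have
`δ_k = U_{k-1}(A)ξ_1 + 2·Σ_{i=2}^k U_{k-i}(A)ξ_i` for `1 ≤ k ≤ N`. -/
theorem cheb_recurrence_accumulated_error (n N : ℕ) (hN : 0 < N)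
    (A : Matrix (Fin n) (Fin n) ℝ) (hA : A.IsSymm)
    (g : Fin n → ℝ) (ξ : ℕ → Fin n → ℝ) (vt : ℕ → Fin n → ℝ)
    (h0 : vt 0 = g)
    (h1 : vt 1 = A.mulVec g - ξ 1)
    (hrec : ∀ k, 2 ≤ k → k ≤ N →
      vt k = (2 : ℝ) • (A.mulVec (vt (k - 1)) - ξ k) - vt (k - 2)) :
    ∀ k, 1 ≤ k → k ≤ N →
      (chebTMat A k).mulVec g - vt k =
        (chebUMat A ((k : ℤ) - 1)).mulVec (ξ 1)
          + (2 : ℝ) • ∑ i ∈ Finset.Icc 2 k, (chebUMat A ((k : ℤ) - (i : ℤ))).mulVec (ξ i) := by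
  suffices key : ∀ k, k ≤ N →
      (chebTMat A k).mulVec g - vt k =
        (chebUMat A ((k : ℤ) - 1)).mulVec (ξ 1)
          + (2 : ℝ) • ∑ i ∈ Finset.Icc 2 k, (chebUMat A ((k : ℤ) - (i : ℤ))).mulVec (ξ i) by
    exact fun k _ hk => key k hk
  intro k
  induction k using Nat.strong_induction_on with
  | _ k ih =>
    match k with
    | 0 =>
      intro _
      have he : Finset.Icc 2 0 = (∅ : Finset ℕ) := by simp
      simp [h0, chebTMat, Polynomial.Chebyshev.T_zero, he,
        show ((0:ℕ):ℤ) - 1 = -1 by norm_num, chebUMat_neg_one, Matrix.zero_mulVec]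
    | 1 =>
      intro _
      have he : Finset.Icc 2 1 = (∅ : Finset ℕ) := by simp
      simp only [h1, chebTMat, Nat.cast_one, Polynomial.Chebyshev.T_one, Polynomial.aeval_X,
        he, Finset.sum_empty, smul_zero, add_zero, show (1:ℤ) - 1 = 0 by norm_num,
        chebUMat_zero, Matrix.one_mulVec]
      abel
    | (k+2) =>
      intro hk
      have ih1 := ih (k+1) (by omega) (by omega)
      have ih0 := ih k (by omega) (by omega)
      have hv := hrec (k+2) (by omega) hk
      rw [show k+2-1 = k+1 from rfl, show k+2-2 = k from rfl] at hv
      have hδ : (chebTMat A (k+2)).mulVec g - vt (k+2)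
          = (2:ℝ) • (A.mulVec ((chebTMat A (k+1)).mulVec g - vt (k+1)))
            - ((chebTMat A k).mulVec g - vt k) + (2:ℝ) • ξ (k+2) := by
        rw [chebTMat_add_two, hv]
        simp only [Matrix.sub_mulVec, Matrix.smul_mulVec, ← Matrix.mulVec_mulVec,
          Matrix.mulVec_sub, smul_sub]
        module
      rw [hδ, ih1, ih0]
      -- index arithmetic
      have c1 : ((k+1:ℕ):ℤ) - 1 = (k:ℤ) := by push_cast; ring
      have c2 : ((k+2:ℕ):ℤ) - 1 = (k:ℤ) + 1 := by push_cast; ring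
      have c3 : ∀ i : ℕ, ((k+1:ℕ):ℤ) - (i:ℤ) = (k:ℤ) + 1 - i := by intro i; push_cast; ring
      have c4 : ∀ i : ℕ, ((k+2:ℕ):ℤ) - (i:ℤ) = (k:ℤ) + 2 - i := by intro i; push_cast; ring
      simp only [c1, c2, c3, c4]
      -- U recurrence for the ξ₁ coefficient
      have hU1 : chebUMat A ((k:ℤ)+1)
          = (2:ℝ) • (A * chebUMat A (k:ℤ)) - chebUMat A ((k:ℤ)-1) := by
        have h := chebUMat_add_two A ((k:ℤ)-1)
        rwa [show (k:ℤ)-1+2 = (k:ℤ)+1 by ring, show (k:ℤ)-1+1 = (k:ℤ) by ring] at h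
      -- extend the Icc 2 k sum to Icc 2 (k+1)
      have hS0 : ∑ i ∈ Finset.Icc 2 k, (chebUMat A ((k:ℤ) - i)).mulVec (ξ i)
          = ∑ i ∈ Finset.Icc 2 (k+1), (chebUMat A ((k:ℤ) - i)).mulVec (ξ i) := by
        apply Finset.sum_subset (Finset.Icc_subset_Icc_right (Nat.le_succ k))
        intro i hi hni
        have : i = k + 1 := by
          simp only [Finset.mem_Icc] at hi hni; omega
        subst this
        rw [show (k:ℤ) - ((k+1:ℕ):ℤ) = -1 by push_cast; ring, chebUMat_neg_one,
          Matrix.zero_mulVec]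
      -- peel the top term of the Icc 2 (k+2) sum
      have hS2 : ∑ i ∈ Finset.Icc 2 (k+2), (chebUMat A ((k:ℤ) + 2 - i)).mulVec (ξ i)
          = (∑ i ∈ Finset.Icc 2 (k+1), (chebUMat A ((k:ℤ) + 2 - i)).mulVec (ξ i))
            + ξ (k+2) := by
        rw [Finset.sum_Icc_succ_top (by omega : 2 ≤ k + 2)]
        congr 1
        rw [show (k:ℤ) + 2 - ((k+2:ℕ):ℤ) = 0 by push_cast; ring, chebUMat_zero,
          Matrix.one_mulVec]
      -- termwise recurrence inside the sum
      have hterm : ∑ i ∈ Finset.Icc 2 (k+1), (chebUMat A ((k:ℤ) + 2 - i)).mulVec (ξ i)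
          = ∑ i ∈ Finset.Icc 2 (k+1),
              ((2:ℝ) • A.mulVec ((chebUMat A ((k:ℤ) + 1 - i)).mulVec (ξ i))
                - (chebUMat A ((k:ℤ) - i)).mulVec (ξ i)) := by
        refine Finset.sum_congr rfl fun i _ => ?_
        have h := chebUMat_add_two A ((k:ℤ) - i)
        rw [show (k:ℤ)-i+2 = (k:ℤ)+2-i by ring, show (k:ℤ)-i+1 = (k:ℤ)+1-i by ring] at h
        rw [h, Matrix.sub_mulVec, Matrix.smul_mulVec, ← Matrix.mulVec_mulVec]
      rw [hS0, hS2, hterm, Finset.sum_sub_distrib, ← Finset.smul_sum, hU1, Matrix.sub_mulVec,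
        Matrix.smul_mulVec, ← Matrix.mulVec_mulVec,
        Matrix.mulVec_add, Matrix.mulVec_smul, mulVec_finsum]
      module
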